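/- arXiv:1607.00264 — 4 statements merged into one kernel-verified Lean document; each statement's English description precedes it below -/
import Mathlib

section
/- The map v_α sending a nonzero polynomial f ∈ K[x₁,…,xₙ] to its Lazard valuation at α ∈ Kⁿ is a valuation: for all nonzero f, g, one has v_α(fg) = v_α(f) + v_α(g) (componentwise addition in ℕⁿ), and if f + g ≠ 0 then v_α(f+g) ≥_lex min(v_α(f), v_α(g)). -/
open MvPolynomial Pointwise

/-- The Lazard valuation of a polynomial `f` at a point `α`: the lexicographically
least exponent vector occurring in the expansion of `f` about `α`
(i.e. in the support of `f(x + α)`), as an element of `Lex (Fin n →₀ ℕ)`. -/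
noncomputable def lazardVal {K : Type*} [CommRing K] {n : ℕ}
    (α : Fin n → K) (f : MvPolynomial (Fin n) K) : Lex (Fin n →₀ ℕ) :=
  WithTop.untopD (toLex 0) (((MvPolynomial.bind₁ (fun i => X i + C (α i)) f).support.image toLex).min)

/-- The min of the support of a polynomial, in lex order. -/
noncomputable def minSupp {K : Type*} [CommRing K] {n : ℕ}
    (p : MvPolynomial (Fin n) K) : Lex (Fin n →₀ ℕ) :=
  WithTop.untopD (toLex 0) ((p.support.image toLex).min)

lemma minSupp_spec {K : Type*} [CommRing K] {n : ℕ}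
    {p : MvPolynomial (Fin n) K} (hp : p ≠ 0) :
    ofLex (minSupp p) ∈ p.support ∧ ∀ c ∈ p.support, minSupp p ≤ toLex c := by
  have hs : (p.support.image toLex).Nonempty := by
    refine Finset.image_nonempty.2 ?_
    exact MvPolynomial.support_nonempty.2 hp
  have hmin : (p.support.image toLex).min = ↑((p.support.image toLex).min' hs) :=
    (Finset.coe_min' hs).symm
  have heq : minSupp p = (p.support.image toLex).min' hs := by
    rw [minSupp, hmin, WithTop.untopD_coe]
  constructor
  · have := Finset.min'_mem _ hs
    rw [← heq] at this
    obtain ⟨a, ha, hae⟩ := Finset.mem_image.1 this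
    rwa [← hae, ofLex_toLex]
  · intro c hc
    rw [heq]
    exact Finset.min'_le _ _ (Finset.mem_image_of_mem _ hc)

lemma minSupp_le {K : Type*} [CommRing K] {n : ℕ}
    {p : MvPolynomial (Fin n) K} (hp : p ≠ 0) {c : Fin n →₀ ℕ} (hc : c ∈ p.support) :
    minSupp p ≤ toLex c := (minSupp_spec hp).2 c hc

lemma minSupp_mul {K : Type*} [Field K] {n : ℕ}
    {p q : MvPolynomial (Fin n) K} (hp : p ≠ 0) (hq : q ≠ 0) :
    minSupp (p * q) = minSupp p + minSupp q := by
  set a := minSupp p with ha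
  set b := minSupp q with hb
  have hamem := (minSupp_spec hp).1
  have hbmem := (minSupp_spec hq).1
  have hpq : p * q ≠ 0 := mul_ne_zero hp hq
  -- the coefficient of the product at ofLex a + ofLex b
  have hcoeff : (p * q).coeff (ofLex a + ofLex b) = p.coeff (ofLex a) * q.coeff (ofLex b) := by
    rw [MvPolynomial.coeff_mul]
    rw [Finset.sum_eq_single (ofLex a, ofLex b)]
    · intro x hx hne
      by_contra hzero
      have h1 : x.1 ∈ p.support := by
        rw [MvPolynomial.mem_support_iff]
        intro h; apply hzero; rw [h, zero_mul]
      have h2 : x.2 ∈ q.support := by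
        rw [MvPolynomial.mem_support_iff]
        intro h; apply hzero; rw [h, mul_zero]
      have hle1 : a ≤ toLex x.1 := minSupp_le hp h1
      have hle2 : b ≤ toLex x.2 := minSupp_le hq h2
      have hsum : x.1 + x.2 = ofLex a + ofLex b := Finset.HasAntidiagonal.mem_antidiagonal.1 hx
      have hsum' : toLex x.1 + toLex x.2 = a + b := by
        have : toLex (x.1 + x.2) = toLex (ofLex a + ofLex b) := by rw [hsum]
        simpa using this
      have h1eq : toLex x.1 = a := by
        by_contra hne1
        have : a + b < toLex x.1 + toLex x.2 :=
          add_lt_add_of_lt_of_le (lt_of_le_of_ne hle1 (Ne.symm hne1)) hle2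
        rw [hsum'] at this
        exact lt_irrefl _ this
      have h2eq : toLex x.2 = b := by
        have := hsum'
        rw [h1eq] at this
        exact add_left_cancel this
      apply hne
      have e1 : x.1 = ofLex a := by rw [← h1eq]; rfl
      have e2 : x.2 = ofLex b := by rw [← h2eq]; rfl
      exact Prod.ext e1 e2
    · intro h
      exfalso
      exact h (Finset.HasAntidiagonal.mem_antidiagonal.2 rfl)
  have hne : (p * q).coeff (ofLex a + ofLex b) ≠ 0 := by
    rw [hcoeff]
    exact mul_ne_zero (MvPolynomial.mem_support_iff.1 hamem)
      (MvPolynomial.mem_support_iff.1 hbmem)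
  have hmem : ofLex a + ofLex b ∈ (p * q).support := MvPolynomial.mem_support_iff.2 hne
  apply le_antisymm
  · have := minSupp_le hpq hmem
    simpa using this
  · set c := ofLex (minSupp (p * q)) with hcdef
    have hc : c ∈ (p * q).support := (minSupp_spec hpq).1
    have hcsub : c ∈ p.support + q.support := MvPolynomial.support_mul p q hc
    obtain ⟨u, hu, v, hv, huv⟩ := Finset.mem_add.1 hcsub
    have : a + b ≤ toLex u + toLex v :=
      add_le_add (minSupp_le hp hu) (minSupp_le hq hv)
    have h2 : toLex u + toLex v = toLex c := by
      have : toLex (u + v) = toLex c := by rw [huv]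
      simpa using this
    calc a + b ≤ toLex u + toLex v := this
      _ = toLex c := h2
      _ = minSupp (p * q) := by
          have : toLex (ofLex (minSupp (p*q))) = minSupp (p*q) := rfl
          rw [← this]
  -- done

lemma minSupp_add {K : Type*} [CommRing K] {n : ℕ}
    {p q : MvPolynomial (Fin n) K} (hp : p ≠ 0) (hq : q ≠ 0) (hpq : p + q ≠ 0) :
    min (minSupp p) (minSupp q) ≤ minSupp (p + q) := by
  have hmem := (minSupp_spec hpq).1
  have : ofLex (minSupp (p + q)) ∈ p.support ∪ q.support :=
    Finsupp.support_add hmem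
  have heq : toLex (ofLex (minSupp (p + q))) = minSupp (p + q) := rfl
  rcases Finset.mem_union.1 this with h | h
  · exact le_trans (min_le_left _ _) (heq ▸ minSupp_le hp h)
  · exact le_trans (min_le_right _ _) (heq ▸ minSupp_le hq h)

lemma bind₁_translate_injective {K : Type*} [CommRing K] {n : ℕ} (α : Fin n → K) :
    Function.Injective
      (MvPolynomial.bind₁ (fun i => X i + C (α i)) :
        MvPolynomial (Fin n) K → MvPolynomial (Fin n) K) := by
  have hleft : ∀ f : MvPolynomial (Fin n) K,
      MvPolynomial.bind₁ (fun i => X i - C (α i))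
        (MvPolynomial.bind₁ (fun i => X i + C (α i)) f) = f := by
    intro f
    rw [MvPolynomial.bind₁_bind₁]
    have : (fun i => MvPolynomial.bind₁ (fun i => (X i : MvPolynomial (Fin n) K) - C (α i))
        (X i + C (α i))) = X := by
      funext i
      simp [MvPolynomial.bind₁_X_right]
    rw [this, MvPolynomial.bind₁_X_left]
    rfl
  intro f g h
  have := congrArg (MvPolynomial.bind₁ (fun i => X i - C (α i))) h
  rwa [hleft, hleft] at this

/-- The map `f ↦ v_α(f)` is a valuation: it is multiplicative, and the valuation of a
sum (when nonzero) is at least the lexicographic minimum of the two valuations. -/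
theorem lazardVal_is_valuation {K : Type*} [Field K] {n : ℕ}
    (α : Fin n → K) (f g : MvPolynomial (Fin n) K) (hf : f ≠ 0) (hg : g ≠ 0) :
    lazardVal α (f * g) = lazardVal α f + lazardVal α g ∧
    (f + g ≠ 0 → min (lazardVal α f) (lazardVal α g) ≤ lazardVal α (f + g)) := by
  set T := (MvPolynomial.bind₁ (fun i => X i + C (α i)) :
    MvPolynomial (Fin n) K →ₐ[K] MvPolynomial (Fin n) K) with hT
  have hTinj := bind₁_translate_injective α
  have hT0 : ∀ p : MvPolynomial (Fin n) K, p ≠ 0 → T p ≠ 0 := by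
    intro p hp h
    exact hp (hTinj (by simpa using h))
  have hlaz : ∀ p : MvPolynomial (Fin n) K, lazardVal α p = minSupp (T p) := fun p => rfl
  constructor
  · rw [hlaz, hlaz, hlaz, map_mul]
    exact minSupp_mul (hT0 f hf) (hT0 g hg)
  · intro hfg
    rw [hlaz, hlaz, hlaz, map_add]
    exact minSupp_add (hT0 f hf) (hT0 g hg) (by rw [← map_add]; exact hT0 _ hfg)
end

section
/- Let K = ℝ or ℂ, let f and g be nonzero polynomials in K[x₁,…,xₙ], and let S ⊂ Kⁿ be connected. Then fg is valuation-invariant in S (i.e., v_α(fg) is constant for α ∈ S) if and only if both f and g are valuation-invariant in S. -/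
open MvPolynomial

/-- A polynomial is valuation-invariant in a set `S` if its Lazard valuation is the
same at every point of `S`. -/
def ValuationInvariant {K : Type*} [CommRing K] {n : ℕ}
    (f : MvPolynomial (Fin n) K) (S : Set (Fin n → K)) : Prop :=
  ∀ α ∈ S, ∀ β ∈ S, lazardVal α f = lazardVal β f

section Aux

variable {K : Type*} [RCLike K] {n : ℕ}

noncomputable def Tr (α : Fin n → K) : MvPolynomial (Fin n) K →ₐ[K] MvPolynomial (Fin n) K :=
  bind₁ (fun i => X i + C (α i))

lemma Tr_inj (α : Fin n → K) : Function.Injective (Tr α) := by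
  have h : ∀ p : MvPolynomial (Fin n) K, bind₁ (fun i => X i - C (α i)) (Tr α p) = p := by
    intro p
    rw [Tr, bind₁_bind₁]
    have : (fun i : Fin n => bind₁ (fun i => X i - C (α i)) (X i + C (α i)))
        = (X : Fin n → MvPolynomial (Fin n) K) := by
      funext i; simp [bind₁_X_right]
    rw [this, bind₁_X_left, AlgHom.id_apply]
  intro a b hab
  have := congrArg (bind₁ (fun i => X i - C (α i))) hab
  rwa [h, h] at this

lemma Tr_ne_zero (α : Fin n → K) {f : MvPolynomial (Fin n) K} (hf : f ≠ 0) : Tr α f ≠ 0 :=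
  fun h => hf (Tr_inj α (by rwa [map_zero]))

lemma lazardVal_def (α : Fin n → K) (f : MvPolynomial (Fin n) K) :
    lazardVal α f = WithTop.untopD (toLex 0) (((Tr α f).support.image toLex).min) := rfl

lemma image_nonempty (α : Fin n → K) {f : MvPolynomial (Fin n) K} (hf : f ≠ 0) :
    ((Tr α f).support.image toLex).Nonempty :=
  (Finset.image_nonempty).2 (support_nonempty.2 (Tr_ne_zero α hf))

lemma lazardVal_eq_min' (α : Fin n → K) {f : MvPolynomial (Fin n) K} (hf : f ≠ 0) :
    lazardVal α f = ((Tr α f).support.image toLex).min' (image_nonempty α hf) := by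
  rw [lazardVal_def, ← Finset.coe_min' (image_nonempty α hf), WithTop.untopD_coe]

lemma coeff_lazardVal_ne_zero (α : Fin n → K) {f : MvPolynomial (Fin n) K} (hf : f ≠ 0) :
    coeff (ofLex (lazardVal α f)) (Tr α f) ≠ 0 := by
  rw [lazardVal_eq_min' α hf]
  have := Finset.min'_mem _ (image_nonempty α hf)
  obtain ⟨m, hm, hme⟩ := Finset.mem_image.1 this
  rw [← hme]
  simpa using (mem_support_iff.1 hm)

lemma lazardVal_le (α : Fin n → K) {f : MvPolynomial (Fin n) K} (hf : f ≠ 0)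
    {m : Fin n →₀ ℕ} (h : coeff m (Tr α f) ≠ 0) : lazardVal α f ≤ toLex m := by
  rw [lazardVal_eq_min' α hf]
  exact Finset.min'_le _ _ (Finset.mem_image.2 ⟨m, mem_support_iff.2 h, rfl⟩)

lemma lazardVal_mul (α : Fin n → K) {f g : MvPolynomial (Fin n) K} (hf : f ≠ 0) (hg : g ≠ 0) :
    lazardVal α (f * g) = lazardVal α f + lazardVal α g := by
  have hfg : f * g ≠ 0 := mul_ne_zero hf hg
  set a := lazardVal α f with ha
  set b := lazardVal α g with hb
  have hT : Tr α (f * g) = Tr α f * Tr α g := map_mul _ _ _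
  -- coeff at a+b is product of the two min coeffs
  have key : coeff (ofLex a + ofLex b) (Tr α f * Tr α g)
      = coeff (ofLex a) (Tr α f) * coeff (ofLex b) (Tr α g) := by
    rw [coeff_mul]
    apply Finset.sum_eq_single_of_mem (ofLex a, ofLex b)
    · simp [Finset.mem_antidiagonal]
    · rintro ⟨u, v⟩ huv hne
      simp only [Finset.HasAntidiagonal.mem_antidiagonal] at huv
      by_contra hprod
      have hu : coeff u (Tr α f) ≠ 0 := fun h => hprod (by simp [h])
      have hv : coeff v (Tr α g) ≠ 0 := fun h => hprod (by simp [h])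
      have h1 : a ≤ toLex u := lazardVal_le α hf hu
      have h2 : b ≤ toLex v := lazardVal_le α hg hv
      have hsum : toLex u + toLex v = a + b := by
        have : toLex (u + v) = toLex (ofLex a + ofLex b) := congrArg toLex huv
        simpa using this
      rcases eq_or_lt_of_le h1 with h1e | h1l
      · have : toLex v = b := by
          have := hsum; rw [← h1e] at this
          exact add_left_cancel this
        have hua : u = ofLex a := (congrArg ofLex h1e).symm
        have hvb : v = ofLex b := congrArg ofLex this
        exact hne (by rw [hua, hvb])
      · have : a + b < toLex u + toLex v := add_lt_add_of_lt_of_le h1l h2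
        rw [hsum] at this; exact lt_irrefl _ this
  have hne : coeff (ofLex a + ofLex b) (Tr α (f * g)) ≠ 0 := by
    rw [hT, key]
    exact mul_ne_zero (coeff_lazardVal_ne_zero α hf) (coeff_lazardVal_ne_zero α hg)
  have hle : lazardVal α (f * g) ≤ a + b := by
    have := lazardVal_le α hfg hne
    simpa using this
  have hge : a + b ≤ lazardVal α (f * g) := by
    have hmem := Finset.min'_mem _ (image_nonempty α hfg)
    rw [← lazardVal_eq_min' α hfg] at hmem
    obtain ⟨m, hm, hme⟩ := Finset.mem_image.1 hmem
    classical
    have hsub := MvPolynomial.support_mul (Tr α f) (Tr α g)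
    rw [← hT] at hsub
    obtain ⟨u, hu, v, hv, rfl⟩ := Finset.mem_add.1 (hsub hm)
    have h1 : a ≤ toLex u := lazardVal_le α hf (mem_support_iff.1 hu)
    have h2 : b ≤ toLex v := lazardVal_le α hg (mem_support_iff.1 hv)
    calc a + b ≤ toLex u + toLex v := add_le_add h1 h2
      _ = toLex (u + v) := rfl
      _ = lazardVal α (f * g) := hme
  exact le_antisymm hle hge

lemma continuous_coeff (f : MvPolynomial (Fin n) K) :
    ∀ m : Fin n →₀ ℕ, Continuous fun α : Fin n → K => coeff m (Tr α f) := by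
  unfold Tr
  induction f using MvPolynomial.induction_on with
  | C a => intro m; simp only [bind₁_C_right]; exact continuous_const
  | add p q hp hq =>
    intro m
    simp only [map_add, coeff_add]
    exact (hp m).add (hq m)
  | mul_X p i hp =>
    intro m
    have : (fun α : Fin n → K => coeff m (bind₁ (fun i => X i + C (α i)) (p * X i)))
        = fun α => (if i ∈ m.support then coeff (m - Finsupp.single i 1)
            (bind₁ (fun i => X i + C (α i)) p) else 0)
          + coeff m (bind₁ (fun i => X i + C (α i)) p) * α i := by
      funext α
      rw [map_mul, bind₁_X_right, mul_add, coeff_add, coeff_mul_X', mul_comm, coeff_C_mul, mul_comm (α i)]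
    rw [this]
    apply Continuous.add
    · by_cases h : i ∈ m.support
      · simp only [if_pos h]; exact hp _
      · simp only [if_neg h]; exact continuous_const
    · exact (hp m).mul (continuous_apply i)

lemma lazard_semicont {f : MvPolynomial (Fin n) K} (hf : f ≠ 0) (α₀ : Fin n → K) :
    ∃ U : Set (Fin n → K), IsOpen U ∧ α₀ ∈ U ∧
      ∀ α ∈ U, lazardVal α f ≤ lazardVal α₀ f := by
  set m₀ := ofLex (lazardVal α₀ f)
  have hc : Continuous fun α : Fin n → K => coeff m₀ (Tr α f) := continuous_coeff f m₀
  have hne : coeff m₀ (Tr α₀ f) ≠ 0 := coeff_lazardVal_ne_zero α₀ hf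
  refine ⟨(fun α => coeff m₀ (Tr α f)) ⁻¹' {0}ᶜ, (isOpen_compl_singleton).preimage hc, hne, ?_⟩
  intro α hα
  have := lazardVal_le α hf (m := m₀) hα
  simpa [m₀] using this

set_option maxHeartbeats 1000000 in
theorem valuationInvariant_mul_iff' {K : Type*} [RCLike K] {n : ℕ}
    (f g : MvPolynomial (Fin n) K) (hf : f ≠ 0) (hg : g ≠ 0)
    (S : Set (Fin n → K)) (hS : IsConnected S) :
    (∀ α ∈ S, ∀ β ∈ S, lazardVal α (f*g) = lazardVal β (f*g)) ↔
      (∀ α ∈ S, ∀ β ∈ S, lazardVal α f = lazardVal β f) ∧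
      (∀ α ∈ S, ∀ β ∈ S, lazardVal α g = lazardVal β g) := by
  constructor
  · intro H
    -- local constancy of both valuations
    have LC : ∀ α ∈ S, ∃ U : Set (Fin n → K), IsOpen U ∧ α ∈ U ∧
        ∀ β ∈ U ∩ S, lazardVal β f = lazardVal α f ∧ lazardVal β g = lazardVal α g := by
      intro α hα
      obtain ⟨U1, hU1, hα1, h1⟩ := lazard_semicont hf α
      obtain ⟨U2, hU2, hα2, h2⟩ := lazard_semicont hg α
      refine ⟨U1 ∩ U2, hU1.inter hU2, ⟨hα1, hα2⟩, ?_⟩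
      rintro β ⟨⟨hβ1, hβ2⟩, hβS⟩
      have e1 : lazardVal β f ≤ lazardVal α f := h1 β hβ1
      have e2 : lazardVal β g ≤ lazardVal α g := h2 β hβ2
      have esum : lazardVal β f + lazardVal β g = lazardVal α f + lazardVal α g := by
        rw [← lazardVal_mul β hf hg, ← lazardVal_mul α hf hg]
        exact H β hβS α hα
      constructor
      · by_contra hne
        have : lazardVal β f + lazardVal β g < lazardVal α f + lazardVal α g :=
          add_lt_add_of_lt_of_le (lt_of_le_of_ne e1 hne) e2
        rw [esum] at this; exact lt_irrefl _ this
      · by_contra hne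
        have h3 : lazardVal β g + lazardVal β f < lazardVal α g + lazardVal α f :=
          add_lt_add_of_lt_of_le (lt_of_le_of_ne e2 hne) e1
        rw [add_comm (lazardVal β g), add_comm (lazardVal α g)] at h3
        rw [esum] at h3; exact lt_irrefl _ h3
    have main : ∀ α ∈ S, ∀ β ∈ S,
        lazardVal β f = lazardVal α f ∧ lazardVal β g = lazardVal α g := by
      intro α hα β hβ
      have LC' : ∀ γ : Fin n → K, ∃ U : Set (Fin n → K), IsOpen U ∧
          (γ ∈ S → γ ∈ U ∧ ∀ δ ∈ U ∩ S,
            lazardVal δ f = lazardVal γ f ∧ lazardVal δ g = lazardVal γ g) := by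
        intro γ
        by_cases h : γ ∈ S
        · obtain ⟨U, a, b, c⟩ := LC γ h; exact ⟨U, a, fun _ => ⟨b, c⟩⟩
        · exact ⟨∅, isOpen_empty, fun h' => absurd h' h⟩
      choose U hUo hU using LC'
      set P : (Fin n → K) → Prop := fun γ =>
        lazardVal γ f = lazardVal α f ∧ lazardVal γ g = lazardVal α g with hP
      set Uu : Set (Fin n → K) := ⋃ γ ∈ {γ | γ ∈ S ∧ P γ}, U γ with hUu
      set Vv : Set (Fin n → K) := ⋃ γ ∈ {γ | γ ∈ S ∧ ¬ P γ}, U γ with hVv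
      have hUuo : IsOpen Uu := isOpen_biUnion fun γ _ => hUo γ
      have hVvo : IsOpen Vv := isOpen_biUnion fun γ _ => hUo γ
      have hcover : S ⊆ Uu ∪ Vv := by
        intro γ hγ
        by_cases hp : P γ
        · exact Or.inl (Set.mem_biUnion ⟨hγ, hp⟩ ((hU γ hγ).1))
        · exact Or.inr (Set.mem_biUnion ⟨hγ, hp⟩ ((hU γ hγ).1))
      have hdisj : ∀ δ ∈ S, δ ∈ Uu → δ ∈ Vv → False := by
        intro δ hδS hδU hδV
        obtain ⟨γ₁, hγ₁, hδU1⟩ := Set.mem_iUnion₂.1 hδU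
        obtain ⟨γ₂, hγ₂, hδU2⟩ := Set.mem_iUnion₂.1 hδV
        have e1 := (hU γ₁ hγ₁.1).2 δ ⟨hδU1, hδS⟩
        have e2 := (hU γ₂ hγ₂.1).2 δ ⟨hδU2, hδS⟩
        exact hγ₂.2 ⟨e2.1.symm.trans (e1.1.trans hγ₁.2.1), e2.2.symm.trans (e1.2.trans hγ₁.2.2)⟩
      have hSUne : (S ∩ Uu).Nonempty :=
        ⟨α, hα, Set.mem_biUnion ⟨hα, rfl, rfl⟩ ((hU α hα).1)⟩
      have hβV : β ∉ Vv := by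
        intro h
        obtain ⟨x, hxS, hxUV⟩ := hS.isPreconnected Uu Vv hUuo hVvo hcover hSUne ⟨β, hβ, h⟩
        exact hdisj x hxS hxUV.1 hxUV.2
      have hβU : β ∈ Uu := (hcover hβ).resolve_right hβV
      obtain ⟨γ, hγ, hβU'⟩ := Set.mem_iUnion₂.1 hβU
      have e := (hU γ hγ.1).2 β ⟨hβU', hβ⟩
      exact ⟨e.1.trans hγ.2.1, e.2.trans hγ.2.2⟩
    exact ⟨fun α hα β hβ => (main α hα β hβ).1.symm, fun α hα β hβ => (main α hα β hβ).2.symm⟩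
  · rintro ⟨Hf, Hg⟩ α hα β hβ
    rw [lazardVal_mul α hf hg, lazardVal_mul β hf hg, Hf α hα β hβ, Hg α hα β hβ]


end Aux

/-- For `K = ℝ` or `ℂ` (any `RCLike` field), nonzero polynomials `f, g` and a connected
subset `S ⊆ Kⁿ` (in the classical topology), the product `fg` is valuation-invariant
in `S` iff both `f` and `g` are valuation-invariant in `S`. -/
theorem valuationInvariant_mul_iff {K : Type*} [RCLike K] {n : ℕ}
    (f g : MvPolynomial (Fin n) K) (hf : f ≠ 0) (hg : g ≠ 0)
    (S : Set (Fin n → K)) (hS : IsConnected S) :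
    ValuationInvariant (f * g) S ↔ ValuationInvariant f S ∧ ValuationInvariant g S := by
  unfold ValuationInvariant
  exact valuationInvariant_mul_iff' f g hf hg S hS
end

section
/- Let f ∈ K[x₁,…,xₙ] be nonzero (K a field), α ∈ K^{n−1}, and let v = (v₁,…,v_{n−1}) be the lexicographically least element of {u ∈ ℕ^{n−1} : f^u ≠ 0}, where f(x₁,…,xₙ) = Σ_u f^u(xₙ)·Π_{i=1}^{n−1}(x_i−α_i)^{u_i}. Then the Lazard evaluation f_α(xₙ) of f at α equals f^v(xₙ). -/
open MvPolynomial Polynomial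

/-- One step of the Lazard evaluation process: view `f` as a polynomial in the first
variable, divide out the highest power of `(x₀ - a)` dividing it, then substitute
`x₀ = a`. -/
noncomputable def lazardStep {K : Type*} [Field K] {n : ℕ} (a : K)
    (f : MvPolynomial (Fin (n + 1)) K) : MvPolynomial (Fin n) K :=
  Polynomial.eval (MvPolynomial.C a)
    ((MvPolynomial.finSuccEquiv K n f) /ₘ
      ((Polynomial.X - Polynomial.C (MvPolynomial.C a)) ^
        ((MvPolynomial.finSuccEquiv K n f).rootMultiplicity (MvPolynomial.C a))))

/-- The Lazard evaluation `f_α(xₙ)` of `f ∈ K[x₀,…,xₙ]` at `α ∈ Kⁿ`. -/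
noncomputable def lazardEval {K : Type*} [Field K] :
    {n : ℕ} → MvPolynomial (Fin (n + 1)) K → (Fin n → K) → Polynomial K
  | 0, f, _ =>
      Polynomial.map (MvPolynomial.isEmptyRingEquiv K (Fin 0)).toRingHom
        (MvPolynomial.finSuccEquiv K 0 f)
  | _ + 1, f, α => lazardEval (lazardStep (α 0) f) (Fin.tail α)

/-- The shift of `f` by `α` in the first `n` variables: the polynomial
`g(x, xₙ) = f(x + α, xₙ)`, whose coefficients give the expansion
`f = Σ_u f^u(xₙ) Π (x_i - α_i)^{u_i}`. -/
noncomputable def partialShift {K : Type*} [CommRing K] {n : ℕ}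
    (f : MvPolynomial (Fin (n + 1)) K) (α : Fin n → K) : MvPolynomial (Fin (n + 1)) K :=
  MvPolynomial.bind₁
    (fun i : Fin (n + 1) =>
      if h : (i : ℕ) < n then X i + MvPolynomial.C (α ⟨i, h⟩) else X i) f

/-- The coefficient `f^u(xₙ) ∈ K[xₙ]` in the expansion
`f = Σ_u f^u(xₙ) Π_{i<n} (x_i - α_i)^{u_i}`. -/
noncomputable def expansionCoeff {K : Type*} [CommRing K] {n : ℕ}
    (f : MvPolynomial (Fin (n + 1)) K) (α : Fin n → K) (u : Fin n → ℕ) : Polynomial K :=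
  ∑ j ∈ Finset.range ((partialShift f α).totalDegree + 1),
    Polynomial.C
        (MvPolynomial.coeff (Finsupp.equivFunOnFinite.symm (Fin.snoc u j))
          (partialShift f α)) *
      Polynomial.X ^ j

lemma coeff_expansionCoeff {K : Type*} [CommRing K] {n : ℕ}
    (f : MvPolynomial (Fin (n + 1)) K) (α : Fin n → K) (u : Fin n → ℕ) (j : ℕ) :
    (expansionCoeff f α u).coeff j =
      MvPolynomial.coeff (Finsupp.equivFunOnFinite.symm (Fin.snoc u j)) (partialShift f α) := by
  rw [expansionCoeff, Polynomial.finset_sum_coeff]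
  by_cases hj : j < (partialShift f α).totalDegree + 1
  · rw [Finset.sum_eq_single j]
    · simp
    · intro b _ hb
      simp [Polynomial.coeff_C_mul, Polynomial.coeff_X_pow, Ne.symm hb]
    · exact fun h => absurd (Finset.mem_range.2 hj) h
  · rw [Finset.sum_eq_zero, eq_comm]
    · apply MvPolynomial.coeff_eq_zero_of_totalDegree_lt
      set d := Finsupp.equivFunOnFinite.symm (Fin.snoc u j : Fin (n+1) → ℕ) with hd
      have hval : d (Fin.last n) = j := by simp [hd]
      have hlast : Fin.last n ∈ d.support := Finsupp.mem_support_iff.2 (by omega)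
      calc (partialShift f α).totalDegree < j := by omega
        _ ≤ _ := hval ▸ Finset.single_le_sum (fun _ _ => Nat.zero_le _) hlast
    · intro b hb
      simp only [Finset.mem_range] at hb
      simp only [Polynomial.coeff_C_mul, Polynomial.coeff_X_pow]
      rw [if_neg (by omega), mul_zero]

lemma partialShift_eq_zero_iff {K : Type*} [CommRing K] {n : ℕ}
    (f : MvPolynomial (Fin (n + 1)) K) (α : Fin n → K) :
    partialShift f α = 0 ↔ f = 0 := by
  constructor
  · intro h
    have h2 : MvPolynomial.bind₁
        (fun i : Fin (n + 1) =>
          if h : (i : ℕ) < n then X i - MvPolynomial.C (α ⟨i, h⟩) else X i)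
        (partialShift f α) = MvPolynomial.bind₁ X f := by
      rw [partialShift, MvPolynomial.bind₁_bind₁]
      exact congrArg (fun g => MvPolynomial.bind₁ g f)
        (funext fun i => by by_cases hi : (i : ℕ) < n <;> simp [hi])
    rw [h, map_zero, MvPolynomial.bind₁_X_left, AlgHom.id_apply] at h2
    exact h2.symm
  · rintro rfl; simp [partialShift]

lemma expansionCoeff_zero {K : Type*} [CommRing K] {n : ℕ}
    (α : Fin n → K) (u : Fin n → ℕ) :
    expansionCoeff (0 : MvPolynomial (Fin (n + 1)) K) α u = 0 := by
  ext j
  rw [coeff_expansionCoeff]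
  simp [partialShift]

lemma exists_expansionCoeff_ne_zero {K : Type*} [CommRing K] {n : ℕ}
    (f : MvPolynomial (Fin (n + 1)) K) (α : Fin n → K) (hf : f ≠ 0) :
    ∃ u, expansionCoeff f α u ≠ 0 := by
  have hps : partialShift f α ≠ 0 := fun h => hf ((partialShift_eq_zero_iff f α).1 h)
  obtain ⟨d, hd⟩ := MvPolynomial.ne_zero_iff.1 hps
  refine ⟨fun i => d i.castSucc, fun h => hd ?_⟩
  have := coeff_expansionCoeff f α (fun i => d i.castSucc) (d (Fin.last n))
  rw [h, Polynomial.coeff_zero] at this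
  have hsnoc : (Fin.snoc (fun i => d i.castSucc) (d (Fin.last n)) : Fin (n+1) → ℕ) = ⇑d := by
    funext i
    refine Fin.lastCases ?_ (fun i' => ?_) i <;> simp
  rw [hsnoc, Finsupp.equivFunOnFinite_symm_coe d] at this
  exact this.symm

lemma snoc_cons_finsupp {n : ℕ} (u : Fin (n + 1) → ℕ) (j : ℕ) :
    (Finsupp.equivFunOnFinite.symm (Fin.snoc u j : Fin (n + 2) → ℕ)) =
      Finsupp.cons (u 0)
        (Finsupp.equivFunOnFinite.symm (Fin.snoc (Fin.tail u) j : Fin (n + 1) → ℕ)) := by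
  ext i
  refine Fin.cases ?_ (fun i' => ?_) i
  · simp [Fin.snoc, Finsupp.cons_zero]
  · rw [Finsupp.cons_succ]
    refine Fin.lastCases ?_ (fun i'' => ?_) i'
    · simp
    · have h1 : (i''.castSucc : Fin (n+1)).succ = (i''.succ).castSucc := by
        ext; simp
      show (Fin.snoc u j : Fin (n + 2) → ℕ) _ = (Fin.snoc (Fin.tail u) j : Fin (n + 1) → ℕ) _
      rw [h1, Fin.snoc_castSucc, Fin.snoc_castSucc]
      rfl

lemma finSuccEquiv_C' {K : Type*} [CommRing K] {n : ℕ} (a : K) :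
    MvPolynomial.finSuccEquiv K n (MvPolynomial.C a) = Polynomial.C (MvPolynomial.C a) := by
  simp [MvPolynomial.finSuccEquiv_apply]

lemma finSuccEquiv_partialShift {K : Type*} [CommRing K] {m : ℕ}
    (f : MvPolynomial (Fin (m + 2)) K) (α : Fin (m + 1) → K) :
    MvPolynomial.finSuccEquiv K (m + 1) (partialShift f α) =
      Polynomial.map
        (MvPolynomial.bind₁ (fun i : Fin (m + 1) =>
          if h : (i : ℕ) < m then X i + MvPolynomial.C (Fin.tail α ⟨i, h⟩) else X i)).toRingHom
        (Polynomial.taylor (MvPolynomial.C (α 0)) (MvPolynomial.finSuccEquiv K (m + 1) f)) := by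
  induction f using MvPolynomial.induction_on with
  | C a =>
      simp [partialShift, finSuccEquiv_C', Polynomial.taylor_C]
  | add p q hp hq =>
      simp only [partialShift, map_add, Polynomial.taylor_apply, Polynomial.add_comp,
        Polynomial.map_add] at *
      rw [hp, hq]
  | mul_X p i hp =>
      rw [show partialShift (p * X i) α = partialShift p α * partialShift (X i) α from
        map_mul _ _ _, map_mul, map_mul, Polynomial.taylor_mul, Polynomial.map_mul, hp]
      refine congrArg (HMul.hMul _) ?_
      have hgen : partialShift (X i : MvPolynomial (Fin (m+2)) K) α =
          if h : (i : ℕ) < m + 1 then X i + MvPolynomial.C (α ⟨i, h⟩) else X i := by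
        simp [partialShift]
      rw [hgen]
      refine Fin.cases ?_ (fun j => ?_) i
      · rw [dif_pos (show ((0 : Fin (m + 2)) : ℕ) < m + 1 by simp)]
        simp only [map_add, MvPolynomial.finSuccEquiv_X_zero, finSuccEquiv_C',
          Polynomial.taylor_X, Polynomial.map_add, Polynomial.map_X, Polynomial.map_C]
        simp
      · by_cases hj : (j : ℕ) < m
        · rw [dif_pos (by simpa using Nat.succ_lt_succ hj)]
          simp only [map_add, MvPolynomial.finSuccEquiv_X_succ, finSuccEquiv_C',
            Polynomial.taylor_C, Polynomial.map_C]
          simp only [AlgHom.toRingHom_eq_coe, RingHom.coe_coe, MvPolynomial.bind₁_X_right,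
            dif_pos hj]
          simp only [Fin.tail]
          ext
          simp
        · rw [dif_neg (by simpa using fun h => hj (Nat.lt_of_succ_lt_succ h))]
          simp only [MvPolynomial.finSuccEquiv_X_succ, Polynomial.taylor_C, Polynomial.map_C]
          simp only [AlgHom.toRingHom_eq_coe, RingHom.coe_coe, MvPolynomial.bind₁_X_right,
            dif_neg hj]

lemma coeff_finSuccEquiv_partialShift {K : Type*} [CommRing K] {m : ℕ}
    (f : MvPolynomial (Fin (m + 2)) K) (α : Fin (m + 1) → K) (k : ℕ) :
    (MvPolynomial.finSuccEquiv K (m + 1) (partialShift f α)).coeff k =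
      partialShift
        ((Polynomial.taylor (MvPolynomial.C (α 0))
          (MvPolynomial.finSuccEquiv K (m + 1) f)).coeff k) (Fin.tail α) := by
  rw [finSuccEquiv_partialShift, Polynomial.coeff_map]
  rfl

lemma expansionCoeff_eq_tail {K : Type*} [CommRing K] {m : ℕ}
    (f : MvPolynomial (Fin (m + 2)) K) (α : Fin (m + 1) → K) (u : Fin (m + 1) → ℕ) :
    expansionCoeff f α u =
      expansionCoeff
        ((Polynomial.taylor (MvPolynomial.C (α 0))
          (MvPolynomial.finSuccEquiv K (m + 1) f)).coeff (u 0))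
        (Fin.tail α) (Fin.tail u) := by
  ext j
  rw [coeff_expansionCoeff, coeff_expansionCoeff, snoc_cons_finsupp,
    ← MvPolynomial.finSuccEquiv_coeff_coeff, coeff_finSuccEquiv_partialShift]

section LazardStepLemmas
variable {K : Type*} [Field K] {n : ℕ} (f : MvPolynomial (Fin (n + 1)) K) (a : K)

lemma taylor_finSuccEquiv_eq :
    Polynomial.taylor (MvPolynomial.C a) (MvPolynomial.finSuccEquiv K n f) =
      Polynomial.X ^ ((MvPolynomial.finSuccEquiv K n f).rootMultiplicity (MvPolynomial.C a)) *
        Polynomial.taylor (MvPolynomial.C a)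
          ((MvPolynomial.finSuccEquiv K n f) /ₘ
            ((Polynomial.X - Polynomial.C (MvPolynomial.C a)) ^
              ((MvPolynomial.finSuccEquiv K n f).rootMultiplicity (MvPolynomial.C a)))) := by
  set g := MvPolynomial.finSuccEquiv K n f
  set A := (MvPolynomial.C a : MvPolynomial (Fin n) K)
  set r := g.rootMultiplicity A
  set q := g /ₘ (Polynomial.X - Polynomial.C A) ^ r with hqdef
  have hg : (Polynomial.X - Polynomial.C A) ^ r * q = g :=
    Polynomial.pow_mul_divByMonic_rootMultiplicity_eq g A
  conv_lhs => rw [← hg]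
  simp only [Polynomial.taylor_apply, Polynomial.mul_comp, Polynomial.pow_comp,
    Polynomial.sub_comp, Polynomial.X_comp, Polynomial.C_comp, add_sub_cancel_right]

lemma lazardStep_eq_taylor_coeff :
    lazardStep a f =
      (Polynomial.taylor (MvPolynomial.C a) (MvPolynomial.finSuccEquiv K n f)).coeff
        ((MvPolynomial.finSuccEquiv K n f).rootMultiplicity (MvPolynomial.C a)) := by
  rw [taylor_finSuccEquiv_eq f a]
  rw [Polynomial.coeff_X_pow_mul', if_pos le_rfl, Nat.sub_self,
    Polynomial.taylor_coeff_zero, lazardStep]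

lemma taylor_coeff_eq_zero_of_lt {k : ℕ}
    (hk : k < (MvPolynomial.finSuccEquiv K n f).rootMultiplicity (MvPolynomial.C a)) :
    (Polynomial.taylor (MvPolynomial.C a) (MvPolynomial.finSuccEquiv K n f)).coeff k = 0 := by
  rw [taylor_finSuccEquiv_eq f a, Polynomial.coeff_X_pow_mul', if_neg (by omega)]

lemma taylor_coeff_rootMultiplicity_ne_zero (hf : f ≠ 0) :
    (Polynomial.taylor (MvPolynomial.C a) (MvPolynomial.finSuccEquiv K n f)).coeff
        ((MvPolynomial.finSuccEquiv K n f).rootMultiplicity (MvPolynomial.C a)) ≠ 0 := by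
  have hg0 : MvPolynomial.finSuccEquiv K n f ≠ 0 := fun h =>
    hf (by simpa using (MvPolynomial.finSuccEquiv K n).injective (by simp [h]))
  rw [← lazardStep_eq_taylor_coeff f a, lazardStep]
  exact Polynomial.eval_divByMonic_pow_rootMultiplicity_ne_zero _ hg0

end LazardStepLemmas

lemma toLex_lt_of_zero_lt {k : ℕ} {x y : Fin (k + 1) → ℕ} (h : x 0 < y 0) :
    toLex x < toLex y :=
  ⟨0, fun j hj => absurd hj (by simp [Fin.lt_def]), h⟩

lemma toLex_lt_of_tail_lt {k : ℕ} {x y : Fin (k + 1) → ℕ} (h0 : x 0 = y 0)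
    (h : toLex (Fin.tail x) < toLex (Fin.tail y)) : toLex x < toLex y := by
  obtain ⟨i, hji, hi⟩ := h
  refine ⟨i.succ, fun j hj => ?_, hi⟩
  induction j using Fin.cases with
  | zero => exact h0
  | succ j' => exact hji j' (show j' < i from Fin.succ_lt_succ_iff.mp hj)

lemma toLex_le_total {k : ℕ} (x y : Fin k → ℕ) :
    toLex x ≤ toLex y ∨ toLex y < toLex x := by
  induction k with
  | zero =>
      left
      have hxy : x = y := funext fun i => i.elim0
      rw [hxy]
  | succ k ihk =>
      rcases lt_trichotomy (x 0) (y 0) with h | h | h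
      · exact Or.inl (le_of_lt (toLex_lt_of_zero_lt h))
      · rcases ihk (Fin.tail x) (Fin.tail y) with h2 | h2
        · rcases eq_or_lt_of_le h2 with h3 | h3
          · left
            have hxy : x = y := by
              have ht : Fin.tail x = Fin.tail y := toLex.injective h3
              funext i
              refine Fin.cases h (fun i' => ?_) i
              exact congrFun ht i'
            rw [hxy]
          · exact Or.inl (le_of_lt (toLex_lt_of_tail_lt h h3))
        · exact Or.inr (toLex_lt_of_tail_lt h.symm h2)
      · exact Or.inr (toLex_lt_of_zero_lt h)

lemma isEmptyRingEquiv_eq_coeff {K : Type*} [CommRing K] (p : MvPolynomial (Fin 0) K) :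
    MvPolynomial.isEmptyRingEquiv K (Fin 0) p = MvPolynomial.coeff 0 p := by
  obtain ⟨a, rfl⟩ := MvPolynomial.C_surjective (Fin 0) p
  simp [MvPolynomial.isEmptyRingEquiv]
  exact (MvPolynomial.coeff_C _ _).trans (if_pos rfl)

lemma partialShift_zero_vars {K : Type*} [CommRing K]
    (f : MvPolynomial (Fin 1) K) (α : Fin 0 → K) : partialShift f α = f := by
  rw [partialShift]
  have h : (fun i : Fin 1 =>
      if h : (i : ℕ) < 0 then MvPolynomial.X i + MvPolynomial.C (α ⟨i, h⟩) else
        MvPolynomial.X i) = MvPolynomial.X :=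
    funext fun i => by simp
  rw [h, MvPolynomial.bind₁_X_left, AlgHom.id_apply]

lemma snoc_zero_finsupp (u : Fin 0 → ℕ) (j : ℕ) :
    (Finsupp.equivFunOnFinite.symm (Fin.snoc u j : Fin 1 → ℕ)) =
      Finsupp.cons j (0 : Fin 0 →₀ ℕ) := by
  ext i
  have : i = 0 := Fin.eq_zero i
  subst this
  rw [Finsupp.cons_zero]
  show (Fin.snoc u j : Fin 1 → ℕ) 0 = j
  have h0 : (0 : Fin 1) = Fin.last 0 := rfl
  rw [h0, Fin.snoc_last]

/-- Let `f ∈ K[x₀,…,xₙ]` be nonzero, `α ∈ Kⁿ`, and let `v` be the lexicographically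
least element of `{u ∈ ℕⁿ : f^u ≠ 0}`, where `f = Σ_u f^u(xₙ) Π (x_i - α_i)^{u_i}`.
Then the Lazard evaluation of `f` at `α` equals `f^v(xₙ)`. -/
theorem lazardEval_eq_expansionCoeff {K : Type*} [Field K] {n : ℕ}
    (f : MvPolynomial (Fin (n + 1)) K) (hf : f ≠ 0) (α : Fin n → K) (v : Fin n → ℕ)
    (hv : IsLeast (toLex '' {u : Fin n → ℕ | expansionCoeff f α u ≠ 0}) (toLex v)) :
    lazardEval f α = expansionCoeff f α v := by
  induction n with
  | zero =>
      ext j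
      rw [lazardEval]
      rw [Polynomial.coeff_map, RingEquiv.toRingHom_eq_coe, RingHom.coe_coe,
        isEmptyRingEquiv_eq_coeff, MvPolynomial.finSuccEquiv_coeff_coeff,
        coeff_expansionCoeff, partialShift_zero_vars, snoc_zero_finsupp]
  | succ m ih =>
      set c : ℕ → MvPolynomial (Fin (m + 1)) K := fun k =>
        (Polynomial.taylor (MvPolynomial.C (α 0))
          (MvPolynomial.finSuccEquiv K (m + 1) f)).coeff k with hc
      set r := (MvPolynomial.finSuccEquiv K (m + 1) f).rootMultiplicity
        (MvPolynomial.C (α 0)) with hr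
      have hL2 : ∀ u : Fin (m + 1) → ℕ,
          expansionCoeff f α u = expansionCoeff (c (u 0)) (Fin.tail α) (Fin.tail u) :=
        fun u => expansionCoeff_eq_tail f α u
      have hvS : expansionCoeff f α v ≠ 0 := by
        obtain ⟨u, hu, hequ⟩ := hv.1
        rwa [toLex.injective hequ] at hu
      have hcr : c r ≠ 0 := taylor_coeff_rootMultiplicity_ne_zero f (α 0) hf
      have hrle : r ≤ v 0 := by
        by_contra h
        push_neg at h
        refine hvS ?_
        rw [hL2 v, show c (v 0) = 0 from taylor_coeff_eq_zero_of_lt f (α 0) h,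
          expansionCoeff_zero]
      obtain ⟨w, hw⟩ := exists_expansionCoeff_ne_zero (c r) (Fin.tail α) hcr
      have hmem : ∀ w' : Fin m → ℕ, expansionCoeff (c r) (Fin.tail α) w' ≠ 0 →
          Fin.cons r w' ∈ {u : Fin (m + 1) → ℕ | expansionCoeff f α u ≠ 0} := by
        intro w' hw'
        rw [Set.mem_setOf_eq, hL2]
        rw [Fin.cons_zero, Fin.tail_cons]
        exact hw'
      have hv0 : v 0 = r := by
        rcases eq_or_lt_of_le hrle with h | h
        · exact h.symm
        · exfalso
          have hle := hv.2 ⟨Fin.cons r w, hmem w hw, rfl⟩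
          have h2 : toLex (Fin.cons r w : Fin (m + 1) → ℕ) < toLex v :=
            toLex_lt_of_zero_lt (by simpa using h)
          exact absurd (lt_of_le_of_lt hle h2) (lt_irrefl _)
      have htail : IsLeast
          (toLex '' {u : Fin m → ℕ | expansionCoeff (c r) (Fin.tail α) u ≠ 0})
          (toLex (Fin.tail v)) := by
        constructor
        · refine ⟨Fin.tail v, ?_, rfl⟩
          rw [Set.mem_setOf_eq, ← hv0, ← hL2]
          exact hvS
        · rintro _ ⟨w', hw', rfl⟩
          rcases toLex_le_total (Fin.tail v) w' with hle | hlt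
          · exact hle
          · exfalso
            have h2 : toLex (Fin.cons r w' : Fin (m + 1) → ℕ) < toLex v := by
              refine toLex_lt_of_tail_lt ?_ ?_
              · rw [Fin.cons_zero, hv0]
              · rwa [Fin.tail_cons]
            exact absurd (lt_of_le_of_lt (hv.2 ⟨Fin.cons r w', hmem w' hw', rfl⟩) h2)
              (lt_irrefl _)
      rw [lazardEval]
      rw [show lazardStep (α 0) f = c r from lazardStep_eq_taylor_coeff f (α 0)]
      rw [ih (c r) hcr (Fin.tail α) (Fin.tail v) htail, hL2 v, hv0]
end

section
/- Let f ∈ K[x₁,…,xₙ] be nonzero, α ∈ K^{n−1}, and let (v₁,…,v_{n−1}) be the nonnegative integers produced by the Lazard evaluation process of f at α. Then f(α, xₙ) is identically zero (as a polynomial in xₙ) if and only if v_i > 0 for some i with 1 ≤ i ≤ n−1. -/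
open MvPolynomial Polynomial

/-- The exponents `v₁,…,vₙ` produced by the Lazard evaluation process. -/
noncomputable def lazardExps {K : Type*} [Field K] :
    {n : ℕ} → MvPolynomial (Fin (n + 1)) K → (Fin n → K) → (Fin n → ℕ)
  | 0, _, _ => fun i => i.elim0
  | _ + 1, f, α =>
      Fin.cons ((MvPolynomial.finSuccEquiv K _ f).rootMultiplicity (MvPolynomial.C (α 0)))
        (lazardExps (lazardStep (α 0) f) (Fin.tail α))

lemma aeval_finSucc {K : Type*} [Field K] {n : ℕ} {A : Type*} [CommRing A] [Algebra K A]
    (σ : Fin (n+1) → A) (f : MvPolynomial (Fin (n + 1)) K) :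
    MvPolynomial.aeval σ f =
      Polynomial.eval (σ 0)
        ((MvPolynomial.finSuccEquiv K n f).map
          (MvPolynomial.aeval (σ ∘ Fin.succ) : MvPolynomial (Fin n) K →ₐ[K] A).toRingHom) := by
  have h : (((MvPolynomial.aeval σ : MvPolynomial (Fin (n+1)) K →ₐ[K] A)) :
        MvPolynomial (Fin (n+1)) K →+* A) =
      RingHom.comp (Polynomial.evalRingHom (σ 0))
        (RingHom.comp (Polynomial.mapRingHom
          (MvPolynomial.aeval (σ ∘ Fin.succ) : MvPolynomial (Fin n) K →ₐ[K] A).toRingHom)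
          (MvPolynomial.finSuccEquiv K n : MvPolynomial (Fin (n+1)) K ≃ₐ[K] _)) := by
    apply MvPolynomial.ringHom_ext
    · intro a
      simp [MvPolynomial.finSuccEquiv_apply, MvPolynomial.algebraMap_eq]
    · intro i
      refine Fin.cases ?_ ?_ i
      · simp [MvPolynomial.finSuccEquiv_X_zero]
      · intro j
        simp [MvPolynomial.finSuccEquiv_X_succ]
  exact congrFun (congrArg (fun g => g.toFun) h) f


/-- For nonzero `f ∈ K[x₀,…,xₙ]` and `α ∈ Kⁿ`, the polynomial `f(α, xₙ)` is
identically zero iff one of the exponents produced by the Lazard evaluation of `f`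
at `α` is positive. -/
theorem lazard_eval_substitution_zero_iff {K : Type*} [Field K] {n : ℕ}
    (f : MvPolynomial (Fin (n + 1)) K) (hf : f ≠ 0) (α : Fin n → K) :
    MvPolynomial.aeval
        (Fin.snoc (fun i => Polynomial.C (α i)) Polynomial.X) f = (0 : Polynomial K) ↔
      ∃ i, 0 < lazardExps f α i := by
  induction n with
  | zero =>
      constructor
      · intro h0
        exfalso
        rw [aeval_finSucc] at h0
        set g := MvPolynomial.finSuccEquiv K 0 f with hg
        have hg0 : g ≠ 0 := by
          rw [hg]; exact (map_ne_zero_iff _ (AlgEquiv.injective _)).mpr hf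
        have hcomp : (MvPolynomial.aeval
              ((Fin.snoc (fun i => Polynomial.C (α i)) Polynomial.X : Fin 1 → Polynomial K)
                ∘ Fin.succ) : MvPolynomial (Fin 0) K →ₐ[K] Polynomial K).toRingHom =
            (Polynomial.C : K →+* Polynomial K).comp
              ((MvPolynomial.isEmptyRingEquiv K (Fin 0)) : MvPolynomial (Fin 0) K →+* K) := by
          apply MvPolynomial.ringHom_ext
          · intro a; simp [MvPolynomial.isEmptyRingEquiv]
            exact (MvPolynomial.coeff_zero_C a).symm
          · intro i; exact i.elim0
        have hσ0 : (Fin.snoc (fun i => Polynomial.C (α i)) Polynomial.X : Fin 1 → Polynomial K) 0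
            = Polynomial.X := by
          have : (0 : Fin 1) = Fin.last 0 := rfl
          rw [this, Fin.snoc_last]
        rw [hcomp, hσ0, ← Polynomial.map_map, Polynomial.eval_map, Polynomial.eval₂_C_X] at h0
        exact hg0 (Polynomial.map_injective _ (MvPolynomial.isEmptyRingEquiv K (Fin 0)).injective
          (by simpa using h0))
      · rintro ⟨i, _⟩; exact i.elim0
  | succ m ih =>
      set a := α 0 with ha
      set g := MvPolynomial.finSuccEquiv K (m+1) f with hgdef
      have hg0 : g ≠ 0 := by
        rw [hgdef]; exact (map_ne_zero_iff _ (AlgEquiv.injective _)).mpr hf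
      set r := g.rootMultiplicity (MvPolynomial.C a) with hr
      set q := g /ₘ (Polynomial.X - Polynomial.C (MvPolynomial.C a)) ^ r with hq
      have hmul : (Polynomial.X - Polynomial.C (MvPolynomial.C a)) ^ r * q = g :=
        Polynomial.pow_mul_divByMonic_rootMultiplicity_eq g (MvPolynomial.C a)
      have hstep : lazardStep a f = Polynomial.eval (MvPolynomial.C a) q := rfl
      have hstep0 : lazardStep a f ≠ 0 := by
        rw [hstep]
        exact Polynomial.eval_divByMonic_pow_rootMultiplicity_ne_zero (MvPolynomial.C a) hg0
      set σ : Fin (m+2) → Polynomial K :=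
        Fin.snoc (fun i => Polynomial.C (α i)) Polynomial.X with hσ
      have hσ0 : σ 0 = Polynomial.C (α 0) := by
        have : (0 : Fin (m+2)) = Fin.castSucc 0 := rfl
        rw [hσ, this, Fin.snoc_castSucc]
      have hcomp : σ ∘ Fin.succ =
          (Fin.snoc (fun i => Polynomial.C (Fin.tail α i)) Polynomial.X :
            Fin (m+1) → Polynomial K) := by
        funext i
        refine Fin.lastCases ?_ ?_ i
        · rw [Function.comp_apply, Fin.succ_last, hσ, Fin.snoc_last, Fin.snoc_last]
        · intro j
          rw [Function.comp_apply, hσ, Fin.succ_castSucc, Fin.snoc_castSucc, Fin.snoc_castSucc]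
          rfl
      set h : MvPolynomial (Fin (m+1)) K →ₐ[K] Polynomial K :=
        MvPolynomial.aeval
          (Fin.snoc (fun i => Polynomial.C (Fin.tail α i)) Polynomial.X) with hh
      have hCa : h.toRingHom (MvPolynomial.C a) = Polynomial.C a := by
        simp [hh, MvPolynomial.algebraMap_eq]
      have key : MvPolynomial.aeval σ f = 0 ^ r * h (lazardStep a f) := by
        rw [aeval_finSucc, hcomp, hσ0, ← hgdef, ← hh, ← hmul, Polynomial.map_mul,
          Polynomial.eval_mul, Polynomial.map_pow, Polynomial.map_sub, Polynomial.map_X,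
          Polynomial.map_C, hCa, Polynomial.eval_pow, Polynomial.eval_sub, Polynomial.eval_X,
          Polynomial.eval_C, sub_self, hstep, ← hCa, Polynomial.eval_map,
          Polynomial.eval₂_at_apply]
        rfl
      rw [hσ] at key
      rw [key]
      have hexps : lazardExps f α = Fin.cons r (lazardExps (lazardStep a f) (Fin.tail α)) := rfl
      rw [hexps, Fin.exists_fin_succ]
      simp only [Fin.cons_zero, Fin.cons_succ]
      rcases Nat.eq_zero_or_pos r with h0 | hpos
      · rw [h0, pow_zero, one_mul]
        simp only [h0, lt_irrefl, false_or]
        exact ih (lazardStep a f) hstep0 (Fin.tail α)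
      · rw [zero_pow hpos.ne', zero_mul]
        simp [hpos]
end
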